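/- Suppose x_{m+1} = A_m x_m admits a general dichotomy with bounds (a_{m,n}) and (b_{m,n}), the f_m are Lipschitz with f_m(0)=0, α < +∞, β < +∞, and 2α + max{2β, √β} < 1. Define the operator Φ on 𝒳 by (Φφ)_n(ξ) = − Σ_{k=n}^{∞} (𝒜_{k+1,n}|_{F_n})^{−1} Q_{k+1} f_k(x^φ_{n,k}(ξ) + φ_k(x^φ_{n,k}(ξ))). Then for every φ ∈ 𝒳, every n ∈ ℕ and all ξ, ξ̄ ∈ E_n one has (Φφ)_n(0) = 0 and ‖(Φφ)_n(ξ) − (Φφ)_n(ξ̄)‖ ≤ (2β/(1 − 2α)) ‖ξ − ξ̄‖ ≤ ‖ξ − ξ̄‖; in particular Φ maps 𝒳 into 𝒳. -/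

import Mathlib

/-- `calA A m n` is the linear evolution operator
`𝒜_{m,n} = A_{m-1} ∘ ⋯ ∘ A_n` (and the identity if `m ≤ n`). -/
def calA {X : Type*} [NormedAddCommGroup X] [NormedSpace ℝ X]
    (A : ℕ → X →L[ℝ] X) : ℕ → ℕ → X →L[ℝ] X
  | 0, _ => ContinuousLinearMap.id ℝ X
  | m + 1, n => if m + 1 ≤ n then ContinuousLinearMap.id ℝ X else (A m).comp (calA A m n)

/-- The operator `Φ` maps `𝒳` into `𝒳`. -/
theorem Phi_maps_X_into_X
    {X : Type*} [NormedAddCommGroup X] [NormedSpace ℝ X] [CompleteSpace X]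
    (A P : ℕ → X →L[ℝ] X) (B : ℕ → ℕ → X →L[ℝ] X) (a b : ℕ → ℕ → ℝ)
    -- the bounds are positive
    (ha : ∀ m n : ℕ, n ≤ m → 0 < a m n) (hb : ∀ m n : ℕ, n ≤ m → 0 < b m n)
    -- the `P n` are bounded projections
    (hproj : ∀ n, (P n).comp (P n) = P n)
    -- (S1) : `P m ∘ 𝒜_{m,n} = 𝒜_{m,n} ∘ P n`
    (hS1 : ∀ m n : ℕ, n ≤ m → (P m).comp (calA A m n) = (calA A m n).comp (P n))
    -- (S2)/(S3) : `B m n` is the operator `(𝒜_{m,n}|_{F n})⁻¹ ∘ Q m`, where `Q m = Id - P m`;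
    -- its existence encodes that `𝒜_{m,n}` maps `F n = ker (P n)` bijectively onto `F m`
    (hB1 : ∀ m n : ℕ, n ≤ m → ∀ x : X, calA A m n (B m n x) = x - P m x)
    (hB2 : ∀ m n : ℕ, n ≤ m → ∀ x : X, B m n (calA A m n x) = x - P n x)
    (hBF : ∀ m n : ℕ, n ≤ m → ∀ x : X, P n (B m n x) = 0)
    -- (D1) : `‖𝒜_{m,n} P n‖ ≤ a m n`
    (hD1 : ∀ m n : ℕ, n ≤ m → ‖(calA A m n).comp (P n)‖ ≤ a m n)
    -- (D2) : `‖(𝒜_{m,n}|_{F n})⁻¹ Q m‖ ≤ b m n`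
    (hD2 : ∀ m n : ℕ, n ≤ m → ‖B m n‖ ≤ b m n)
    -- the perturbations `f k` vanish at `0` and are Lipschitz with constant `L k`
    (f : ℕ → X → X) (L : ℕ → ℝ) (hL0 : ∀ k, 0 ≤ L k) (hf0 : ∀ k, f k 0 = 0)
    (hLip : ∀ (k : ℕ) (u v : X), ‖f k u - f k v‖ ≤ L k * ‖u - v‖)
    -- `α = sup_{m>n} (1/a_{m,n}) ∑_{k=n}^{m-1} a_{m,k+1} a_{k,n} Lip(f k) < ∞`
    (α : ℝ)
    (hα : IsLUB {r : ℝ | ∃ m n : ℕ, n < m ∧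
      r = (∑ k ∈ Finset.Ico n m, a m (k + 1) * (a k n * L k)) / a m n} α)
    -- `β = sup_n ∑_{k=n}^{∞} b_{k+1,n} a_{k,n} Lip(f k) < ∞`
    (β : ℝ)
    (hsum : ∀ n : ℕ, Summable fun j : ℕ => b (n + j + 1) n * (a (n + j) n * L (n + j)))
    (hβ : IsLUB {r : ℝ | ∃ n : ℕ,
      r = ∑' j : ℕ, b (n + j + 1) n * (a (n + j) n * L (n + j))} β)
    -- `2α + max {2β, √β} < 1`
    (hcond : 2 * α + max (2 * β) (Real.sqrt β) < 1)
    (φ : ∀ n : ℕ, LinearMap.range (P n : X →ₗ[ℝ] X) → LinearMap.ker (P n : X →ₗ[ℝ] X))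
    (hφ : ((∀ n, φ n 0 = 0) ∧
      ∀ (n : ℕ) (ξ ξ' : LinearMap.range (P n : X →ₗ[ℝ] X)),
        ‖(φ n ξ : X) - (φ n ξ' : X)‖ ≤ ‖(ξ : X) - (ξ' : X)‖))
    (x : ∀ n m : ℕ, LinearMap.range (P n : X →ₗ[ℝ] X) → LinearMap.range (P m : X →ₗ[ℝ] X))
    (hx : ∀ n : ℕ, ((∀ m : ℕ, n ≤ m → x n m 0 = 0) ∧
      (∃ C : ℝ, ∀ m : ℕ, n ≤ m → ∀ ξ : LinearMap.range (P n : X →ₗ[ℝ] X),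
        ‖(x n m ξ : X)‖ ≤ C * (a m n * ‖(ξ : X)‖)) ∧
      (∀ m : ℕ, n ≤ m → ∀ ξ : LinearMap.range (P n : X →ₗ[ℝ] X),
        (x n m ξ : X) = calA A m n (ξ : X) +
          ∑ k ∈ Finset.Ico n m,
            calA A m (k + 1) (P (k + 1) (f k ((x n k ξ : X) + (φ k (x n k ξ) : X)))))))
    -- `ψ = Φ φ`
    (ψ : ∀ n : ℕ, LinearMap.range (P n : X →ₗ[ℝ] X) → LinearMap.ker (P n : X →ₗ[ℝ] X))
    (hΦ : ∀ (n : ℕ) (ξ : LinearMap.range (P n : X →ₗ[ℝ] X)),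
      HasSum
        (fun j : ℕ => B (n + j + 1) n (f (n + j)
          ((x n (n + j) ξ : X) + (φ (n + j) (x n (n + j) ξ) : X))))
        (-(ψ n ξ : X)))
    :
    (∀ n : ℕ, ψ n 0 = 0) ∧
    (∀ (n : ℕ) (ξ ξ' : LinearMap.range (P n : X →ₗ[ℝ] X)),
      ‖(ψ n ξ : X) - (ψ n ξ' : X)‖ ≤ 2 * β / (1 - 2 * α) * ‖(ξ : X) - (ξ' : X)‖) ∧
    (∀ (n : ℕ) (ξ ξ' : LinearMap.range (P n : X →ₗ[ℝ] X)),
      2 * β / (1 - 2 * α) * ‖(ξ : X) - (ξ' : X)‖ ≤ ‖(ξ : X) - (ξ' : X)‖) ∧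
    ((∀ n, ψ n 0 = 0) ∧
      ∀ (n : ℕ) (ξ ξ' : LinearMap.range (P n : X →ₗ[ℝ] X)),
        ‖(ψ n ξ : X) - (ψ n ξ' : X)‖ ≤ ‖(ξ : X) - (ξ' : X)‖) := by
  obtain ⟨hφ0, hφlip⟩ := hφ
  -- P n fixes elements of its range
  have hPfix : ∀ (n : ℕ) (u : X), u ∈ LinearMap.range (P n : X →ₗ[ℝ] X) → P n u = u := by
    rintro n u ⟨y, rfl⟩
    have := ContinuousLinearMap.ext_iff.mp (hproj n) y
    simpa using this
  -- nonnegativity of α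
  have hα0 : 0 ≤ α := by
    refine le_trans ?_ (hα.1 ⟨1, 0, Nat.zero_lt_one, rfl⟩)
    apply div_nonneg _ (ha 1 0 (by norm_num)).le
    apply Finset.sum_nonneg
    intro k hk
    rw [Finset.mem_Ico] at hk
    exact mul_nonneg (ha 1 (k + 1) (by omega)).le
      (mul_nonneg (ha k 0 (by omega)).le (hL0 k))
  have hβ0 : 0 ≤ β := by
    refine le_trans ?_ (hβ.1 ⟨0, rfl⟩)
    apply tsum_nonneg
    intro j
    exact mul_nonneg (hb (0 + j + 1) 0 (by omega)).le
      (mul_nonneg (ha (0 + j) 0 (by omega)).le (hL0 _))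
  have hmax0 : (0:ℝ) ≤ max (2 * β) (Real.sqrt β) :=
    le_trans (by linarith) (le_max_left _ _)
  have h2α : 2 * α < 1 := by linarith
  have h1 : 0 < 1 - 2 * α := by linarith
  have h2β : 2 * β ≤ max (2 * β) (Real.sqrt β) := le_max_left _ _
  have hratio : 2 * β / (1 - 2 * α) ≤ 1 := by
    rw [div_le_one h1]; linarith
  -- the sum bound by α, valid for all m ≥ n
  have hαbound : ∀ m n : ℕ, n ≤ m →
      (∑ k ∈ Finset.Ico n m, a m (k + 1) * (a k n * L k)) ≤ α * a m n := by
    intro m n hm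
    rcases eq_or_lt_of_le hm with h | h
    · subst h
      simp only [Finset.Ico_self, Finset.sum_empty]
      exact mul_nonneg hα0 (ha _ _ le_rfl).le
    · have := hα.1 ⟨m, n, h, rfl⟩
      rw [div_le_iff₀ (ha m n hm)] at this
      linarith
  -- key estimate on the sequences x
  have key : ∀ (n : ℕ) (ξ ξ' : LinearMap.range (P n : X →ₗ[ℝ] X)), ∃ S : ℝ, 0 ≤ S ∧
      S * (1 - 2 * α) ≤ ‖(ξ : X) - (ξ' : X)‖ ∧
      ∀ m : ℕ, n ≤ m → ‖(x n m ξ : X) - (x n m ξ' : X)‖ ≤ S * a m n := by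
    intro n ξ ξ'
    obtain ⟨hx0, ⟨C, hC⟩, hrec⟩ := hx n
    set d := ‖(ξ : X) - (ξ' : X)‖ with hd
    set T : Set ℝ :=
      {r : ℝ | ∃ m : ℕ, n ≤ m ∧ r = ‖(x n m ξ : X) - (x n m ξ' : X)‖ / a m n} with hT
    have hne : T.Nonempty := ⟨_, n, le_rfl, rfl⟩
    have hbdd : BddAbove T := by
      refine ⟨C * ‖(ξ : X)‖ + C * ‖(ξ' : X)‖, ?_⟩
      rintro r ⟨m, hm, rfl⟩
      rw [div_le_iff₀ (ha m n hm)]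
      have h1' := hC m hm ξ
      have h2' := hC m hm ξ'
      have h3' := norm_sub_le (x n m ξ : X) (x n m ξ' : X)
      nlinarith
    set S := sSup T with hS
    have hmem : ∀ m : ℕ, n ≤ m →
        ‖(x n m ξ : X) - (x n m ξ' : X)‖ / a m n ≤ S := by
      intro m hm
      exact le_csSup hbdd ⟨m, hm, rfl⟩
    have hS0 : 0 ≤ S :=
      le_trans (div_nonneg (norm_nonneg _) (ha n n le_rfl).le) (hmem n le_rfl)
    have hSm : ∀ m : ℕ, n ≤ m →
        ‖(x n m ξ : X) - (x n m ξ' : X)‖ ≤ S * a m n := by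
      intro m hm
      have := hmem m hm
      rw [div_le_iff₀ (ha m n hm)] at this
      linarith
    refine ⟨S, hS0, ?_, hSm⟩
    -- per-element estimate
    have hstep : ∀ m : ℕ, n ≤ m →
        ‖(x n m ξ : X) - (x n m ξ' : X)‖ / a m n ≤ d + 2 * S * α := by
      intro m hm
      rw [div_le_iff₀ (ha m n hm)]
      rw [hrec m hm ξ, hrec m hm ξ']
      have hrw : calA A m n (ξ : X) +
          (∑ k ∈ Finset.Ico n m, calA A m (k + 1)
            (P (k + 1) (f k ((x n k ξ : X) + (φ k (x n k ξ) : X))))) -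
          (calA A m n (ξ' : X) +
          ∑ k ∈ Finset.Ico n m, calA A m (k + 1)
            (P (k + 1) (f k ((x n k ξ' : X) + (φ k (x n k ξ') : X))))) =
          calA A m n ((ξ : X) - (ξ' : X)) +
          ∑ k ∈ Finset.Ico n m,
            (calA A m (k + 1) (P (k + 1) (f k ((x n k ξ : X) + (φ k (x n k ξ) : X)))) -
             calA A m (k + 1) (P (k + 1) (f k ((x n k ξ' : X) + (φ k (x n k ξ') : X))))) := by
        rw [map_sub, Finset.sum_sub_distrib]; abel
      rw [hrw]
      have hAbound : ‖calA A m n ((ξ : X) - (ξ' : X))‖ ≤ a m n * d := by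
        have hfix : P n ((ξ : X) - (ξ' : X)) = (ξ : X) - (ξ' : X) := by
          rw [map_sub, hPfix n _ ξ.2, hPfix n _ ξ'.2]
        have : calA A m n ((ξ : X) - (ξ' : X)) =
            ((calA A m n).comp (P n)) ((ξ : X) - (ξ' : X)) := by
          rw [ContinuousLinearMap.comp_apply, hfix]
        rw [this]
        calc ‖((calA A m n).comp (P n)) ((ξ : X) - (ξ' : X))‖
            ≤ ‖(calA A m n).comp (P n)‖ * d := ContinuousLinearMap.le_opNorm _ _
          _ ≤ a m n * d := mul_le_mul_of_nonneg_right (hD1 m n hm) (norm_nonneg _)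
      have hterm : ∀ k ∈ Finset.Ico n m,
          ‖calA A m (k + 1) (P (k + 1) (f k ((x n k ξ : X) + (φ k (x n k ξ) : X)))) -
           calA A m (k + 1) (P (k + 1) (f k ((x n k ξ' : X) + (φ k (x n k ξ') : X))))‖ ≤
          2 * S * (a m (k + 1) * (a k n * L k)) := by
        intro k hk
        rw [Finset.mem_Ico] at hk
        set u := (x n k ξ : X) + (φ k (x n k ξ) : X)
        set u' := (x n k ξ' : X) + (φ k (x n k ξ') : X)
        have huu' : ‖u - u'‖ ≤ 2 * (S * a k n) := by
          have h1' := hSm k hk.1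
          have h2' := hφlip k (x n k ξ) (x n k ξ')
          have h3' : u - u' = ((x n k ξ : X) - (x n k ξ' : X)) +
              ((φ k (x n k ξ) : X) - (φ k (x n k ξ') : X)) := by simp only [u, u']; abel
          calc ‖u - u'‖ ≤ ‖(x n k ξ : X) - (x n k ξ' : X)‖ +
                ‖(φ k (x n k ξ) : X) - (φ k (x n k ξ') : X)‖ := by
                rw [h3']; exact norm_add_le _ _
            _ ≤ 2 * (S * a k n) := by linarith
        have hfd : ‖f k u - f k u'‖ ≤ L k * (2 * (S * a k n)) :=
          le_trans (hLip k u u') (mul_le_mul_of_nonneg_left huu' (hL0 k))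
        have hcomp : calA A m (k + 1) (P (k + 1) (f k u)) -
            calA A m (k + 1) (P (k + 1) (f k u')) =
            ((calA A m (k + 1)).comp (P (k + 1))) (f k u - f k u') := by
          simp [map_sub]
        rw [hcomp]
        calc ‖((calA A m (k + 1)).comp (P (k + 1))) (f k u - f k u')‖
            ≤ ‖(calA A m (k + 1)).comp (P (k + 1))‖ * ‖f k u - f k u'‖ :=
              ContinuousLinearMap.le_opNorm _ _
          _ ≤ a m (k + 1) * (L k * (2 * (S * a k n))) := by
              apply mul_le_mul (hD1 m (k + 1) (by omega)) hfd (norm_nonneg _)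
                (ha m (k + 1) (by omega)).le
          _ = 2 * S * (a m (k + 1) * (a k n * L k)) := by ring
      calc ‖calA A m n ((ξ : X) - (ξ' : X)) + ∑ k ∈ Finset.Ico n m,
            (calA A m (k + 1) (P (k + 1) (f k ((x n k ξ : X) + (φ k (x n k ξ) : X)))) -
             calA A m (k + 1) (P (k + 1) (f k ((x n k ξ' : X) + (φ k (x n k ξ') : X)))))‖
          ≤ ‖calA A m n ((ξ : X) - (ξ' : X))‖ + ∑ k ∈ Finset.Ico n m,
            ‖calA A m (k + 1) (P (k + 1) (f k ((x n k ξ : X) + (φ k (x n k ξ) : X)))) -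
             calA A m (k + 1) (P (k + 1) (f k ((x n k ξ' : X) + (φ k (x n k ξ') : X))))‖ :=
            le_trans (norm_add_le _ _) (by gcongr; exact norm_sum_le _ _)
        _ ≤ a m n * d + ∑ k ∈ Finset.Ico n m, 2 * S * (a m (k + 1) * (a k n * L k)) :=
            add_le_add hAbound (Finset.sum_le_sum hterm)
        _ = a m n * d + 2 * S * ∑ k ∈ Finset.Ico n m, a m (k + 1) * (a k n * L k) := by
            rw [Finset.mul_sum]
        _ ≤ a m n * d + 2 * S * (α * a m n) := by
            have := hαbound m n hm
            nlinarith [hS0]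
        _ = (d + 2 * S * α) * a m n := by ring
    have hSle : S ≤ d + 2 * S * α := by
      apply csSup_le hne
      rintro r ⟨m, hm, rfl⟩
      exact hstep m hm
    nlinarith
  -- ψ vanishes at 0
  have hψ0 : ∀ n : ℕ, ψ n 0 = 0 := by
    intro n
    have h := hΦ n 0
    have hz : (fun j : ℕ => B (n + j + 1) n (f (n + j)
        ((x n (n + j) 0 : X) + (φ (n + j) (x n (n + j) 0) : X)))) = fun _ => (0 : X) := by
      funext j
      have hx00 := (hx n).1 (n + j) (by omega)
      rw [hx00, hφ0]
      simp [hf0]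
    rw [hz] at h
    have := hasSum_zero.unique h
    have hcoe : (ψ n 0 : X) = 0 := by
      have : -(ψ n 0 : X) = 0 := this.symm
      simpa using this
    exact Subtype.ext hcoe
  -- the Lipschitz estimate
  have hlip : ∀ (n : ℕ) (ξ ξ' : LinearMap.range (P n : X →ₗ[ℝ] X)),
      ‖(ψ n ξ : X) - (ψ n ξ' : X)‖ ≤ 2 * β / (1 - 2 * α) * ‖(ξ : X) - (ξ' : X)‖ := by
    intro n ξ ξ'
    obtain ⟨S, hS0, hSle, hSm⟩ := key n ξ ξ'
    set d := ‖(ξ : X) - (ξ' : X)‖ with hd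
    have hd0 : 0 ≤ d := norm_nonneg _
    have hsub := (hΦ n ξ).sub (hΦ n ξ')
    have hbound : ∀ j : ℕ,
        ‖B (n + j + 1) n (f (n + j) ((x n (n + j) ξ : X) + (φ (n + j) (x n (n + j) ξ) : X))) -
         B (n + j + 1) n (f (n + j) ((x n (n + j) ξ' : X) + (φ (n + j) (x n (n + j) ξ') : X)))‖
        ≤ 2 * S * (b (n + j + 1) n * (a (n + j) n * L (n + j))) := by
      intro j
      set u := (x n (n + j) ξ : X) + (φ (n + j) (x n (n + j) ξ) : X)
      set u' := (x n (n + j) ξ' : X) + (φ (n + j) (x n (n + j) ξ') : X)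
      have huu' : ‖u - u'‖ ≤ 2 * (S * a (n + j) n) := by
        have h1' := hSm (n + j) (by omega)
        have h2' := hφlip (n + j) (x n (n + j) ξ) (x n (n + j) ξ')
        have h3' : u - u' = ((x n (n + j) ξ : X) - (x n (n + j) ξ' : X)) +
            ((φ (n + j) (x n (n + j) ξ) : X) - (φ (n + j) (x n (n + j) ξ') : X)) := by
          simp only [u, u']; abel
        calc ‖u - u'‖ ≤ ‖(x n (n + j) ξ : X) - (x n (n + j) ξ' : X)‖ +
              ‖(φ (n + j) (x n (n + j) ξ) : X) - (φ (n + j) (x n (n + j) ξ') : X)‖ := by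
              rw [h3']; exact norm_add_le _ _
          _ ≤ 2 * (S * a (n + j) n) := by linarith
      have hfd : ‖f (n + j) u - f (n + j) u'‖ ≤ L (n + j) * (2 * (S * a (n + j) n)) :=
        le_trans (hLip (n + j) u u') (mul_le_mul_of_nonneg_left huu' (hL0 _))
      calc ‖B (n + j + 1) n (f (n + j) u) - B (n + j + 1) n (f (n + j) u')‖
          = ‖B (n + j + 1) n (f (n + j) u - f (n + j) u')‖ := by rw [map_sub]
        _ ≤ ‖B (n + j + 1) n‖ * ‖f (n + j) u - f (n + j) u'‖ :=
            ContinuousLinearMap.le_opNorm _ _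
        _ ≤ b (n + j + 1) n * (L (n + j) * (2 * (S * a (n + j) n))) := by
            apply mul_le_mul (hD2 (n + j + 1) n (by omega)) hfd (norm_nonneg _)
              (hb (n + j + 1) n (by omega)).le
        _ = 2 * S * (b (n + j + 1) n * (a (n + j) n * L (n + j))) := by ring
    have hg : HasSum (fun j : ℕ => 2 * S * (b (n + j + 1) n * (a (n + j) n * L (n + j))))
        (2 * S * ∑' j : ℕ, b (n + j + 1) n * (a (n + j) n * L (n + j))) :=
      (hsum n).hasSum.mul_left (2 * S)
    have hnorm : ‖∑' j : ℕ,
        (B (n + j + 1) n (f (n + j) ((x n (n + j) ξ : X) + (φ (n + j) (x n (n + j) ξ) : X))) -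
         B (n + j + 1) n (f (n + j) ((x n (n + j) ξ' : X) + (φ (n + j) (x n (n + j) ξ') : X))))‖
        ≤ 2 * S * ∑' j : ℕ, b (n + j + 1) n * (a (n + j) n * L (n + j)) :=
      tsum_of_norm_bounded hg hbound
    rw [hsub.tsum_eq] at hnorm
    have heq : -(ψ n ξ : X) - -(ψ n ξ' : X) = (ψ n ξ' : X) - (ψ n ξ : X) := by abel
    rw [heq, norm_sub_rev] at hnorm
    have htβ : (∑' j : ℕ, b (n + j + 1) n * (a (n + j) n * L (n + j))) ≤ β :=
      hβ.1 ⟨n, rfl⟩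
    have hSd : S ≤ d / (1 - 2 * α) := by
      rw [le_div_iff₀ h1]; linarith
    calc ‖(ψ n ξ : X) - (ψ n ξ' : X)‖
        ≤ 2 * S * ∑' j : ℕ, b (n + j + 1) n * (a (n + j) n * L (n + j)) := hnorm
      _ ≤ 2 * S * β := by nlinarith
      _ ≤ 2 * β / (1 - 2 * α) * d := by
          rw [div_mul_eq_mul_div, le_div_iff₀ h1]
          nlinarith
  have hthird : ∀ (n : ℕ) (ξ ξ' : LinearMap.range (P n : X →ₗ[ℝ] X)),
      2 * β / (1 - 2 * α) * ‖(ξ : X) - (ξ' : X)‖ ≤ ‖(ξ : X) - (ξ' : X)‖ := by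
    intro n ξ ξ'
    calc 2 * β / (1 - 2 * α) * ‖(ξ : X) - (ξ' : X)‖
        ≤ 1 * ‖(ξ : X) - (ξ' : X)‖ :=
          mul_le_mul_of_nonneg_right hratio (norm_nonneg _)
      _ = ‖(ξ : X) - (ξ' : X)‖ := one_mul _
  exact ⟨hψ0, hlip, hthird, hψ0, fun n ξ ξ' => (hlip n ξ ξ').trans (hthird n ξ ξ')⟩
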